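/- The sorted ℓ1 penalty with β_{s+1} > β_s satisfies condition (R2): with R(z) = Σ_{j=1}^N β_j |z|_[j], 0 ≤ β_1 ≤ … ≤ β_N, and β_{s+1} > β_s, for all z_1, …, z_{s+1} > 0 one has R(z_1,…,z_s,z_{s+1},0,…,0) > R(z_1,…,z_{s-1}, z_s + z_{s+1}, 0,…,0). -/

import Mathlib

open Finset

private lemma strictMono_le_apply_aux {k : ℕ} {f : Fin k → ℕ} (hf : StrictMono f) :
    ∀ n : ℕ, ∀ i : Fin k, (i : ℕ) = n → n ≤ f i := by
  intro n
  induction n with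
  | zero => intro i _; omega
  | succ n ih =>
    intro i hi
    have hn' : n < k := by omega
    have h1 : f ⟨n, hn'⟩ < f i := hf (by simp only [Fin.lt_def]; omega)
    have h2 := ih ⟨n, hn'⟩ rfl
    omega

private lemma strictMono_le_apply {k : ℕ} {f : Fin k → ℕ} (hf : StrictMono f) (i : Fin k) :
    (i : ℕ) ≤ f i := strictMono_le_apply_aux hf _ i rfl

/-- Rearrangement bound: a sum of an antitone function over any finite set of naturals is
at most the sum over the initial segment of the same cardinality. -/
private lemma sum_finset_le_sum_range {G : ℕ → ℝ} (hG : Antitone G) (S : Finset ℕ) :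
    ∑ i ∈ S, G i ≤ ∑ j ∈ Finset.range S.card, G j := by
  classical
  have hS : S = Finset.image (fun j : Fin S.card => S.orderEmbOfFin rfl j) Finset.univ := by
    apply Finset.coe_injective
    rw [Finset.coe_image, Finset.coe_univ, Set.image_univ]
    exact (Finset.range_orderEmbOfFin S rfl).symm
  calc ∑ i ∈ S, G i
      = ∑ j : Fin S.card, G (S.orderEmbOfFin rfl j) := by
        conv_lhs => rw [hS]
        rw [Finset.sum_image (fun a _ b _ h => (S.orderEmbOfFin rfl).injective h)]
    _ ≤ ∑ j : Fin S.card, G (j : ℕ) := by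
        apply Finset.sum_le_sum
        intro j _
        exact hG (strictMono_le_apply (S.orderEmbOfFin rfl).strictMono j)
    _ = ∑ j ∈ Finset.range S.card, G j := Fin.sum_univ_eq_sum_range G S.card

private lemma card_filter_lt {N k : ℕ} (hk : k ≤ N) :
    (Finset.univ.filter fun i : Fin N => (i : ℕ) < k).card = k := by
  have h : (Finset.univ.filter fun i : Fin N => (i : ℕ) < k) =
      Finset.map (Fin.castLEEmb hk) Finset.univ := by
    ext i
    simp only [Finset.mem_filter, Finset.mem_map, Finset.mem_univ, true_and]
    constructor
    · intro hi
      exact ⟨⟨(i : ℕ), hi⟩, by ext; simp [Fin.castLEEmb]⟩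
    · rintro ⟨j, rfl⟩
      simpa [Fin.castLEEmb] using j.isLt
  rw [h, Finset.card_map, Finset.card_univ, Fintype.card_fin]

/-- The exchange lemma: merging the value at `q` into `p` can only increase the sum over
some set of the same cardinality. -/
private lemma exists_exchange {N : ℕ} {v₁ v₂ : Fin N → ℝ} (h1 : ∀ i, 0 ≤ v₁ i)
    (h2 : ∀ i, 0 ≤ v₂ i) {p q : Fin N} (hpq : p ≠ q)
    (hoff : ∀ i, i ≠ p → i ≠ q → v₂ i = v₁ i) (hp : v₂ p = v₁ p + v₁ q)
    (T : Finset (Fin N)) :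
    ∃ U : Finset (Fin N), U.card = T.card ∧ ∑ i ∈ T, v₁ i ≤ ∑ i ∈ U, v₂ i := by
  classical
  by_cases hqT : q ∈ T
  · have hTpos : 0 < T.card := Finset.card_pos.mpr ⟨q, hqT⟩
    by_cases hpT : p ∈ T
    · -- both p and q in T: replace q by an arbitrary outside element
      have hcard : (T.erase q).card = T.card - 1 := Finset.card_erase_of_mem hqT
      obtain ⟨r, hr⟩ : ∃ r, r ∉ T.erase q := by
        by_contra h
        push_neg at h
        have hsub : (Finset.univ : Finset (Fin N)) ⊆ T.erase q := fun x _ => h x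
        have hc := Finset.card_le_card hsub
        have hc2 := Finset.card_le_univ T
        simp only [Finset.card_univ, Fintype.card_fin] at hc hc2
        have hq0 := q.isLt
        omega
      refine ⟨insert r (T.erase q), ?_, ?_⟩
      · rw [Finset.card_insert_of_notMem hr, hcard]; omega
      · rw [Finset.sum_insert hr]
        have hpe : p ∈ T.erase q := Finset.mem_erase.mpr ⟨hpq, hpT⟩
        have e1 : v₂ p + ∑ i ∈ (T.erase q).erase p, v₂ i = ∑ i ∈ T.erase q, v₂ i :=
          Finset.add_sum_erase _ _ hpe
        have e2 : ∑ i ∈ (T.erase q).erase p, v₂ i = ∑ i ∈ (T.erase q).erase p, v₁ i := by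
          apply Finset.sum_congr rfl
          intro i hi
          simp only [Finset.mem_erase] at hi
          exact hoff i hi.1 hi.2.1
        have e3 : v₁ q + ∑ i ∈ T.erase q, v₁ i = ∑ i ∈ T, v₁ i :=
          Finset.add_sum_erase _ _ hqT
        have e4 : v₁ p + ∑ i ∈ (T.erase q).erase p, v₁ i = ∑ i ∈ T.erase q, v₁ i :=
          Finset.add_sum_erase _ _ hpe
        have h5 := h2 r
        rw [hp] at e1
        linarith
    · -- q in T, p not in T: replace q by p
      have hpe : p ∉ T.erase q := fun h => hpT (Finset.mem_of_mem_erase h)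
      refine ⟨insert p (T.erase q), ?_, ?_⟩
      · rw [Finset.card_insert_of_notMem hpe, Finset.card_erase_of_mem hqT]; omega
      · rw [Finset.sum_insert hpe, hp]
        have e2 : ∑ i ∈ T.erase q, v₂ i = ∑ i ∈ T.erase q, v₁ i := by
          apply Finset.sum_congr rfl
          intro i hi
          have hiT := Finset.mem_of_mem_erase hi
          have hiq := Finset.ne_of_mem_erase hi
          exact hoff i (fun h => hpT (h ▸ hiT)) hiq
        have e3 : v₁ q + ∑ i ∈ T.erase q, v₁ i = ∑ i ∈ T, v₁ i :=
          Finset.add_sum_erase _ _ hqT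
        have h5 := h1 p
        linarith
  · -- q not in T
    refine ⟨T, rfl, Finset.sum_le_sum ?_⟩
    intro i hi
    by_cases hip : i = p
    · subst hip; rw [hp]; have := h1 q; linarith
    · rw [hoff i hip (fun h => hqT (h ▸ hi))]

private lemma sum_eq_exchange {N : ℕ} {v₁ v₂ : Fin N → ℝ} {p q : Fin N} (hpq : p ≠ q)
    (hoff : ∀ i, i ≠ p → i ≠ q → v₂ i = v₁ i) (hp : v₂ p = v₁ p + v₁ q) (hq : v₂ q = 0) :
    ∑ i, v₂ i = ∑ i, v₁ i := by
  classical
  have hqu : q ∈ (Finset.univ : Finset (Fin N)) := Finset.mem_univ q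
  have hpu : p ∈ Finset.univ.erase q := Finset.mem_erase.mpr ⟨hpq, Finset.mem_univ p⟩
  have e1 : v₂ q + ∑ i ∈ Finset.univ.erase q, v₂ i = ∑ i, v₂ i :=
    Finset.add_sum_erase _ _ hqu
  have e2 : v₂ p + ∑ i ∈ (Finset.univ.erase q).erase p, v₂ i
      = ∑ i ∈ Finset.univ.erase q, v₂ i := Finset.add_sum_erase _ _ hpu
  have e3 : v₁ q + ∑ i ∈ Finset.univ.erase q, v₁ i = ∑ i, v₁ i :=
    Finset.add_sum_erase _ _ hqu
  have e4 : v₁ p + ∑ i ∈ (Finset.univ.erase q).erase p, v₁ i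
      = ∑ i ∈ Finset.univ.erase q, v₁ i := Finset.add_sum_erase _ _ hpu
  have e5 : ∑ i ∈ (Finset.univ.erase q).erase p, v₂ i
      = ∑ i ∈ (Finset.univ.erase q).erase p, v₁ i := by
    apply Finset.sum_congr rfl
    intro i hi
    simp only [Finset.mem_erase] at hi
    exact hoff i hi.1 hi.2.1
  rw [hq] at e1
  rw [hp] at e2
  linarith

private lemma antitone_extend {N : ℕ} {a : Fin N → ℝ} (ha : Antitone a) (h0 : ∀ i, 0 ≤ a i) :
    Antitone (fun n : ℕ => if h : n < N then a ⟨n, h⟩ else 0) := by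
  intro m n hmn
  dsimp only
  by_cases hn : n < N
  · have hm : m < N := lt_of_le_of_lt hmn hn
    rw [dif_pos hn, dif_pos hm]
    exact ha (show (⟨m, hm⟩ : Fin N) ≤ ⟨n, hn⟩ from hmn)
  · rw [dif_neg hn]
    by_cases hm : m < N
    · rw [dif_pos hm]; exact h0 _
    · rw [dif_neg hm]

private lemma sum_range_extend {N k : ℕ} (hk : k ≤ N) (a : Fin N → ℝ) :
    ∑ j ∈ Finset.range k, (if h : j < N then a ⟨j, h⟩ else 0)
      = ∑ j ∈ Finset.univ.filter (fun i : Fin N => (i : ℕ) < k), a j := by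
  classical
  refine Finset.sum_bij'
    (fun n hn => (⟨n, lt_of_lt_of_le (Finset.mem_range.mp hn) hk⟩ : Fin N))
    (fun i _ => (i : ℕ)) ?_ ?_ ?_ ?_ ?_
  · intro n hn
    simp only [Finset.mem_filter, Finset.mem_univ, true_and]
    exact Finset.mem_range.mp hn
  · intro i hi
    simp only [Finset.mem_filter, Finset.mem_univ, true_and] at hi
    exact Finset.mem_range.mpr hi
  · intro n hn; rfl
  · intro i hi; rfl
  · intro n hn
    rw [dif_pos (lt_of_lt_of_le (Finset.mem_range.mp hn) hk)]

private lemma sum_fin_le_sum_range {N : ℕ} {b : Fin N → ℝ} (hb : Antitone b)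
    (h0 : ∀ i, 0 ≤ b i) (U : Finset (Fin N)) :
    ∑ j ∈ U, b j ≤ ∑ j ∈ Finset.range U.card, (if h : j < N then b ⟨j, h⟩ else 0) := by
  classical
  have hBanti : Antitone (fun n : ℕ => if h : n < N then b ⟨n, h⟩ else 0) :=
    antitone_extend hb h0
  have key := sum_finset_le_sum_range hBanti (U.image (fun i : Fin N => (i : ℕ)))
  have hcard : (U.image (fun i : Fin N => (i : ℕ))).card = U.card :=
    Finset.card_image_of_injective _ Fin.val_injective
  rw [hcard] at key
  refine le_trans (le_of_eq ?_) key
  rw [Finset.sum_image (f := fun n : ℕ => if h : n < N then b ⟨n, h⟩ else 0)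
    (g := fun i : Fin N => (i : ℕ)) (fun x _ y _ h => Fin.val_injective h)]
  apply Finset.sum_congr rfl
  intro j _
  rw [dif_pos j.isLt]

/-- The sorted `ℓ1` penalty with `β_{s+1} > β_s` satisfies condition (R2):
with `R z = ∑ j, β j * |z|_[j]` (weights `0 ≤ β 0 ≤ … ≤ β (N-1)` paired with
the magnitudes of `z` in decreasing order) and `β` strictly increasing from
position `s` to `s+1` (1-based), for positive `z 0, …, z s`,
`R (z 0,…,z (s-1), z s, 0,…,0) > R (z 0,…,z (s-2), z (s-1) + z s, 0,…,0)`. -/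
theorem sortedL1_satisfies_R2 (N s : ℕ) (hs : 1 ≤ s) (hN : s + 1 ≤ N)
    (β : Fin N → ℝ) (hβnonneg : ∀ j, 0 ≤ β j) (hβmono : Monotone β)
    (hβs : β ⟨s - 1, by omega⟩ < β ⟨s, by omega⟩)
    (R : (Fin N → ℝ) → ℝ)
    (hR : ∀ z : Fin N → ℝ, ∀ σ : Equiv.Perm (Fin N),
      Antitone (fun j => |z (σ j)|) → R z = ∑ j, β j * |z (σ j)|)
    (z : Fin (s + 1) → ℝ) (hz : ∀ i, 0 < z i)
    (v₁ v₂ : Fin N → ℝ)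
    (hv₁ : v₁ = fun (j : Fin N) => if h : (j : ℕ) < s + 1 then z ⟨j, h⟩ else 0)
    (hv₂ : v₂ = fun (j : Fin N) =>
      if h : (j : ℕ) < s - 1 then z ⟨j, by omega⟩
      else if (j : ℕ) = s - 1 then z ⟨s - 1, by omega⟩ + z ⟨s, by omega⟩
      else 0) :
    R v₂ < R v₁ := by
  classical
  have hsN : s < N := by omega
  have hs1N : s - 1 < N := by omega
  set p : Fin N := ⟨s - 1, hs1N⟩ with hpdef
  set q : Fin N := ⟨s, hsN⟩ with hqdef
  have hpq : p ≠ q := by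
    simp only [hpdef, hqdef, ne_eq, Fin.mk.injEq]
    omega
  have hv₁nn : ∀ i, 0 ≤ v₁ i := by
    intro i; rw [hv₁]; dsimp only
    split_ifs with h
    · exact (hz _).le
    · exact le_rfl
  have hv₂nn : ∀ i, 0 ≤ v₂ i := by
    intro i; rw [hv₂]; dsimp only
    split_ifs with h h'
    · exact (hz _).le
    · have := hz ⟨s - 1, by omega⟩
      have := hz ⟨s, by omega⟩
      linarith
    · exact le_rfl
  have hoff : ∀ i, i ≠ p → i ≠ q → v₂ i = v₁ i := by
    intro i hip hiq
    have hip' : (i : ℕ) ≠ s - 1 := fun h => hip (Fin.ext h)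
    have hiq' : (i : ℕ) ≠ s := fun h => hiq (Fin.ext h)
    rw [hv₁, hv₂]; dsimp only
    split_ifs with h1 h2 h3 <;> first | rfl | omega
  have hp' : v₂ p = v₁ p + v₁ q := by
    rw [hv₁, hv₂]
    have hpv : (p : ℕ) = s - 1 := rfl
    have hqv : (q : ℕ) = s := rfl
    dsimp only
    rw [dif_neg (by omega), if_pos hpv, dif_pos (show (p : ℕ) < s + 1 by omega),
      dif_pos (show (q : ℕ) < s + 1 by omega)]
  have hq' : v₂ q = 0 := by
    rw [hv₂]; dsimp only
    have hpv : (p : ℕ) = s - 1 := rfl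
    have hqv : (q : ℕ) = s := rfl
    rw [dif_neg (by omega), if_neg (by omega)]
  have hv₁ne : ∀ i : Fin N, v₁ i ≠ 0 ↔ (i : ℕ) < s + 1 := by
    intro i; rw [hv₁]; dsimp only
    constructor
    · intro h; by_contra hc; rw [dif_neg hc] at h; exact h rfl
    · intro h; rw [dif_pos h]; exact (hz _).ne'
  have hv₂ne : ∀ i : Fin N, v₂ i ≠ 0 ↔ (i : ℕ) < s := by
    intro i; rw [hv₂]; dsimp only
    constructor
    · intro h
      by_contra hc
      push_neg at hc
      rw [dif_neg (by omega), if_neg (by omega)] at h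
      exact h rfl
    · intro h
      by_cases h1 : (i : ℕ) < s - 1
      · rw [dif_pos h1]; exact (hz _).ne'
      · rw [dif_neg h1, if_pos (by omega)]
        have := hz ⟨s - 1, by omega⟩
        have := hz ⟨s, by omega⟩
        have : (0:ℝ) < z ⟨s - 1, by omega⟩ + z ⟨s, by omega⟩ := by linarith
        exact this.ne'
  -- sorting permutations
  set σ₁ : Equiv.Perm (Fin N) := Tuple.sort (fun i => -v₁ i) with hσ₁
  set σ₂ : Equiv.Perm (Fin N) := Tuple.sort (fun i => -v₂ i) with hσ₂
  have hanti₁ : Antitone (fun j => v₁ (σ₁ j)) := by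
    intro m n h
    have := Tuple.monotone_sort (fun i => -v₁ i) h
    simpa using this
  have hanti₂ : Antitone (fun j => v₂ (σ₂ j)) := by
    intro m n h
    have := Tuple.monotone_sort (fun i => -v₂ i) h
    simpa using this
  have hR₁ : R v₁ = ∑ j, β j * v₁ (σ₁ j) := by
    rw [hR v₁ σ₁ (by
      have : (fun j => |v₁ (σ₁ j)|) = fun j => v₁ (σ₁ j) :=
        funext fun j => abs_of_nonneg (hv₁nn _)
      rw [this]; exact hanti₁)]
    exact Finset.sum_congr rfl fun j _ => by rw [abs_of_nonneg (hv₁nn _)]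
  have hR₂ : R v₂ = ∑ j, β j * v₂ (σ₂ j) := by
    rw [hR v₂ σ₂ (by
      have : (fun j => |v₂ (σ₂ j)|) = fun j => v₂ (σ₂ j) :=
        funext fun j => abs_of_nonneg (hv₂nn _)
      rw [this]; exact hanti₂)]
    exact Finset.sum_congr rfl fun j _ => by rw [abs_of_nonneg (hv₂nn _)]
  -- extended sequences
  set A : ℕ → ℝ := fun n => if h : n < N then v₁ (σ₁ ⟨n, h⟩) else 0 with hA
  set B : ℕ → ℝ := fun n => if h : n < N then v₂ (σ₂ ⟨n, h⟩) else 0 with hB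
  set W : ℕ → ℝ := fun n => if h : n < N then β ⟨n, h⟩ else 0 with hW
  have hAnn : ∀ n, 0 ≤ A n := by
    intro n; rw [hA]; dsimp only; split_ifs
    · exact hv₁nn _
    · exact le_rfl
  have hBanti : Antitone B := antitone_extend hanti₂ (fun i => hv₂nn _)
  -- cardinality of supports
  have hcard₁ : (Finset.univ.filter fun j : Fin N => v₁ (σ₁ j) ≠ 0).card = s + 1 := by
    have e1 : (Finset.univ.filter fun j : Fin N => v₁ (σ₁ j) ≠ 0).card
        = (Finset.univ.filter fun i : Fin N => v₁ i ≠ 0).card := by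
      apply Finset.card_equiv σ₁
      intro i
      simp
    rw [e1]
    have e2 : (Finset.univ.filter fun i : Fin N => v₁ i ≠ 0)
        = Finset.univ.filter fun i : Fin N => (i : ℕ) < s + 1 :=
      Finset.filter_congr fun i _ => by simp [hv₁ne i]
    rw [e2, card_filter_lt hN]
  have hcard₂ : (Finset.univ.filter fun j : Fin N => v₂ (σ₂ j) ≠ 0).card = s := by
    have e1 : (Finset.univ.filter fun j : Fin N => v₂ (σ₂ j) ≠ 0).card
        = (Finset.univ.filter fun i : Fin N => v₂ i ≠ 0).card := by
      apply Finset.card_equiv σ₂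
      intro i
      simp
    rw [e1]
    have e2 : (Finset.univ.filter fun i : Fin N => v₂ i ≠ 0)
        = Finset.univ.filter fun i : Fin N => (i : ℕ) < s :=
      Finset.filter_congr fun i _ => by simp [hv₂ne i]
    rw [e2, card_filter_lt (by omega)]
  -- the (s+1)-th largest entry of v₁ is positive
  have ha_s_pos : 0 < v₁ (σ₁ ⟨s, hsN⟩) := by
    rcases lt_or_ge 0 (v₁ (σ₁ ⟨s, hsN⟩)) with h | h
    · exact h
    have h0 : v₁ (σ₁ ⟨s, hsN⟩) = 0 := le_antisymm h (hv₁nn _)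
    exfalso
    have hsub : (Finset.univ.filter fun j : Fin N => v₁ (σ₁ j) ≠ 0)
        ⊆ Finset.univ.filter fun j : Fin N => (j : ℕ) < s := by
      intro j hj
      simp only [Finset.mem_filter, Finset.mem_univ, true_and] at hj ⊢
      by_contra hns
      push_neg at hns
      have hle : v₁ (σ₁ j) ≤ v₁ (σ₁ ⟨s, hsN⟩) :=
        hanti₁ (show (⟨s, hsN⟩ : Fin N) ≤ j from hns)
      exact hj (le_antisymm (h0 ▸ hle) (hv₁nn _))
    have hcc := Finset.card_le_card hsub
    rw [hcard₁, card_filter_lt hsN.le] at hcc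
    omega
  -- entries of sorted v₂ vanish from position s on
  have hbz : ∀ j : Fin N, s ≤ (j : ℕ) → v₂ (σ₂ j) = 0 := by
    intro j hj
    by_contra hc
    have hjpos : 0 < v₂ (σ₂ j) := lt_of_le_of_ne (hv₂nn _) (Ne.symm hc)
    have hsub : (Finset.univ.filter fun i : Fin N => (i : ℕ) < (j : ℕ) + 1)
        ⊆ Finset.univ.filter fun i : Fin N => v₂ (σ₂ i) ≠ 0 := by
      intro i hi
      simp only [Finset.mem_filter, Finset.mem_univ, true_and] at hi ⊢
      have hle : v₂ (σ₂ j) ≤ v₂ (σ₂ i) := hanti₂ (show i ≤ j from by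
        simp only [Fin.le_def]; omega)
      exact (lt_of_lt_of_le hjpos hle).ne'
    have hcc := Finset.card_le_card hsub
    rw [hcard₂, card_filter_lt (by omega : (j : ℕ) + 1 ≤ N)] at hcc
    omega
  -- top-k comparison
  have htop : ∀ k ≤ N, ∑ j ∈ Finset.range k, A j ≤ ∑ j ∈ Finset.range k, B j := by
    intro k hk
    simp only [hA, hB]
    rw [sum_range_extend hk (fun j => v₁ (σ₁ j))]
    set F := Finset.univ.filter fun i : Fin N => (i : ℕ) < k with hF
    have hT : ∑ j ∈ F, v₁ (σ₁ j) = ∑ i ∈ F.image σ₁, v₁ i := by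
      rw [Finset.sum_image (fun x _ y _ h => σ₁.injective h)]
    have hTcard : (F.image σ₁).card = k := by
      rw [Finset.card_image_of_injective _ σ₁.injective, hF, card_filter_lt hk]
    obtain ⟨U, hUcard, hUle⟩ := exists_exchange hv₁nn hv₂nn hpq hoff hp' (F.image σ₁)
    have hU2 : ∑ i ∈ U, v₂ i = ∑ j ∈ U.image σ₂.symm, v₂ (σ₂ j) := by
      rw [Finset.sum_image (fun x _ y _ h => σ₂.symm.injective h)]
      exact Finset.sum_congr rfl fun i _ => by rw [Equiv.apply_symm_apply]
    have key := sum_fin_le_sum_range hanti₂ (fun i => hv₂nn _) (U.image σ₂.symm)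
    have hUcard2 : (U.image σ₂.symm).card = k := by
      rw [Finset.card_image_of_injective _ σ₂.symm.injective, hUcard, hTcard]
    rw [hUcard2] at key
    calc ∑ j ∈ F, v₁ (σ₁ j) = ∑ i ∈ F.image σ₁, v₁ i := hT
      _ ≤ ∑ i ∈ U, v₂ i := hUle
      _ = ∑ j ∈ U.image σ₂.symm, v₂ (σ₂ j) := hU2
      _ ≤ ∑ j ∈ Finset.range k, (if h : j < N then v₂ (σ₂ ⟨j, h⟩) else 0) := key
  -- totals
  have htotA : ∑ j ∈ Finset.range N, A j = ∑ i, v₁ i := by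
    rw [← Fin.sum_univ_eq_sum_range A N, ← Equiv.sum_comp σ₁ v₁]
    apply Finset.sum_congr rfl
    intro j _
    rw [hA]; dsimp only; rw [dif_pos j.isLt]
  have htotB : ∑ j ∈ Finset.range N, B j = ∑ i, v₂ i := by
    rw [← Fin.sum_univ_eq_sum_range B N, ← Equiv.sum_comp σ₂ v₂]
    apply Finset.sum_congr rfl
    intro j _
    rw [hB]; dsimp only; rw [dif_pos j.isLt]
  have htot : ∑ j ∈ Finset.range N, A j = ∑ j ∈ Finset.range N, B j := by
    rw [htotA, htotB, sum_eq_exchange hpq hoff hp' hq']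
  -- strict comparison at position s
  have hstrict : ∑ j ∈ Finset.range s, A j < ∑ j ∈ Finset.range s, B j := by
    have e1 : ∑ j ∈ Finset.range s, A j + ∑ j ∈ Finset.Ico s N, A j
        = ∑ j ∈ Finset.range N, A j := by
      rw [Finset.range_eq_Ico, Finset.range_eq_Ico]
      exact Finset.sum_Ico_consecutive _ (Nat.zero_le s) hsN.le
    have e2 : ∑ j ∈ Finset.range s, B j + ∑ j ∈ Finset.Ico s N, B j
        = ∑ j ∈ Finset.range N, B j := by
      rw [Finset.range_eq_Ico, Finset.range_eq_Ico]
      exact Finset.sum_Ico_consecutive _ (Nat.zero_le s) hsN.le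
    have hBz : ∑ j ∈ Finset.Ico s N, B j = 0 := by
      apply Finset.sum_eq_zero
      intro j hj
      simp only [Finset.mem_Ico] at hj
      rw [hB]; dsimp only; rw [dif_pos hj.2]
      exact hbz ⟨j, hj.2⟩ hj.1
    have hAs : 0 < ∑ j ∈ Finset.Ico s N, A j := by
      have hmem : s ∈ Finset.Ico s N := Finset.mem_Ico.mpr ⟨le_rfl, hsN⟩
      have h1 : A s ≤ ∑ j ∈ Finset.Ico s N, A j :=
        Finset.single_le_sum (fun i _ => hAnn i) hmem
      have h2 : 0 < A s := by
        rw [hA]; dsimp only; rw [dif_pos hsN]; exact ha_s_pos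
      linarith
    linarith [htot]
  -- Abel summation
  have abel := Finset.sum_range_by_parts W (fun n => A n - B n) N
  have hzero : ∑ j ∈ Finset.range N, (A j - B j) = 0 := by
    rw [Finset.sum_sub_distrib, htot, sub_self]
  rw [hzero, smul_zero, zero_sub] at abel
  have hpos : 0 < ∑ i ∈ Finset.range (N - 1),
      (W (i + 1) - W i) * (∑ j ∈ Finset.range (i + 1), (B j - A j)) := by
    apply Finset.sum_pos'
    · intro i hi
      simp only [Finset.mem_range] at hi
      apply mul_nonneg
      · have hi1 : i + 1 < N := by omega
        have hiN : i < N := by omega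
        rw [hW]; dsimp only; rw [dif_pos hi1, dif_pos hiN]
        have : (⟨i, hiN⟩ : Fin N) ≤ ⟨i + 1, hi1⟩ := by
          simp only [Fin.le_def]; omega
        linarith [hβmono this]
      · rw [Finset.sum_sub_distrib]
        have := htop (i + 1) (by omega)
        linarith
    · refine ⟨s - 1, Finset.mem_range.mpr (by omega), ?_⟩
      have h1 : s - 1 + 1 = s := by omega
      apply mul_pos
      · rw [hW]; dsimp only; rw [h1, dif_pos hsN, dif_pos hs1N]
        have hβs' : β ⟨s - 1, hs1N⟩ < β ⟨s, hsN⟩ := hβs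
        linarith [hβs']
      · rw [h1, Finset.sum_sub_distrib]
        linarith [hstrict]
  have hfin : R v₁ - R v₂ = ∑ i ∈ Finset.range N, W i * (A i - B i) := by
    rw [hR₁, hR₂, ← Finset.sum_sub_distrib,
      ← Fin.sum_univ_eq_sum_range (fun n => W n * (A n - B n)) N]
    apply Finset.sum_congr rfl
    intro j _
    rw [hW, hA, hB]; dsimp only
    rw [dif_pos j.isLt, dif_pos j.isLt, dif_pos j.isLt]
    ring
  have hconn : ∑ i ∈ Finset.range N, W i * (A i - B i)
      = ∑ i ∈ Finset.range (N - 1),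
          (W (i + 1) - W i) * (∑ j ∈ Finset.range (i + 1), (B j - A j)) := by
    calc ∑ i ∈ Finset.range N, W i * (A i - B i)
        = ∑ i ∈ Finset.range N, W i • (A i - B i) := by
          simp [smul_eq_mul]
      _ = -∑ i ∈ Finset.range (N - 1),
            (W (i + 1) - W i) • ∑ j ∈ Finset.range (i + 1), (A j - B j) := abel
      _ = ∑ i ∈ Finset.range (N - 1),
            (W (i + 1) - W i) * (∑ j ∈ Finset.range (i + 1), (B j - A j)) := by
          rw [← Finset.sum_neg_distrib]
          apply Finset.sum_congr rfl
          intro i _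
          rw [smul_eq_mul]
          have h2 : ∑ j ∈ Finset.range (i + 1), (B j - A j)
              = -∑ j ∈ Finset.range (i + 1), (A j - B j) := by
            rw [← Finset.sum_neg_distrib]
            apply Finset.sum_congr rfl
            intros
            ring
          rw [h2]; ring
  have : 0 < R v₁ - R v₂ := by rw [hfin, hconn]; exact hpos
  linarith
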